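/- Let f : [0,∞) → (0,∞) and set M(x,y) = f(x)f(y). Then ρ_M(x,y) = |x−y|/(f(|x|)f(|y|)) is a metric on ℝ if and only if f is increasing, f(x)/x is decreasing on (0,∞), and f is convex on [0,∞). -/

import Mathlib

section Aux
variable (f : ℝ → ℝ)
variable (hpos : ∀ a : ℝ, 0 ≤ a → 0 < f a)
variable (hmono : ∀ a b : ℝ, 0 ≤ a → a ≤ b → f a ≤ f b)
variable (hslope : ∀ a b : ℝ, 0 ≤ a → a ≤ b → a * f b ≤ b * f a)
variable (hconv : ∀ p q r : ℝ, 0 ≤ p → p ≤ q → q ≤ r →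
    (r - p) * f q ≤ (r - q) * f p + (q - p) * f r)

include hpos hmono hslope hconv

-- L1 assuming a ≤ b
lemma aux_L1' : ∀ a b c : ℝ, 0 ≤ a → 0 ≤ c → a ≤ b →
    |a - b| * f c ≤ |a - c| * f b + |c - b| * f a := by
  intro a b c ha hc hab
  have hb : (0:ℝ) ≤ b := le_trans ha hab
  rcases le_total c a with h1 | h1
  · -- c ≤ a ≤ b
    rw [abs_of_nonpos (by linarith), abs_of_nonneg (by linarith),
      abs_of_nonpos (by linarith)]
    have m1 := hmono c a hc h1
    have m2 := hmono c b hc (le_trans h1 hab)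
    have p1 := hpos a ha
    nlinarith [mul_nonneg (sub_nonneg.2 h1) (hpos b hb).le,
      mul_nonneg (sub_nonneg.2 hab) (sub_nonneg.2 m1)]
  · rcases le_total c b with h2 | h2
    · -- a ≤ c ≤ b : convexity
      rw [abs_of_nonpos (by linarith), abs_of_nonpos (by linarith),
        abs_of_nonpos (by linarith)]
      have := hconv a c b ha h1 h2
      linarith
    · -- a ≤ b ≤ c
      rw [abs_of_nonpos (by linarith), abs_of_nonpos (by linarith),
        abs_of_nonneg (by linarith)]
      have s1 := hslope b c hb h2
      rcases eq_or_lt_of_le hb with hb0 | hb0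
      · have ha0 : a = 0 := le_antisymm (hb0 ▸ hab) ha
        subst ha0; subst hb0
        norm_num
        nlinarith [mul_nonneg hc (hpos 0 le_rfl).le]
      · nlinarith [mul_nonneg (sub_nonneg.2 hab) (sub_nonneg.2 s1),
          mul_nonneg (mul_nonneg ha (sub_nonneg.2 h2)) (hpos b hb).le,
          mul_nonneg (mul_nonneg hb (sub_nonneg.2 h2)) (hpos a ha).le, hb0]

lemma aux_L1 : ∀ a b c : ℝ, 0 ≤ a → 0 ≤ b → 0 ≤ c →
    |a - b| * f c ≤ |a - c| * f b + |c - b| * f a := by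
  intro a b c ha hb hc
  rcases le_total a b with h | h
  · exact aux_L1' f hpos hmono hslope hconv a b c ha hc h
  · have := aux_L1' f hpos hmono hslope hconv b a c hb hc h
    rw [abs_sub_comm b a, abs_sub_comm b c, abs_sub_comm c a] at this
    linarith

lemma aux_L2 : ∀ a b c : ℝ, 0 ≤ a → 0 ≤ b → 0 ≤ c →
    (a + b) * f c ≤ |a - c| * f b + (c + b) * f a := by
  intro a b c ha hb hc
  rcases le_total c a with h1 | h1
  · -- c ≤ a
    rw [abs_of_nonneg (by linarith)]
    rcases le_total c b with h2 | h2
    · -- c ≤ b as well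
      have m1 := hmono c a hc h1
      have m2 := hmono c b hc h2
      nlinarith [mul_nonneg (sub_nonneg.2 h1) (sub_nonneg.2 m2),
        mul_nonneg (add_nonneg hc hb) (sub_nonneg.2 m1)]
    · -- b ≤ c ≤ a : convexity at b ≤ c ≤ a
      have hcv := hconv b c a hb h2 h1
      have m1 := hmono c a hc h1
      nlinarith [mul_nonneg hb (sub_nonneg.2 m1)]
  · -- a ≤ c
    rw [abs_of_nonpos (by linarith)]
    rcases le_total c b with h2 | h2
    · -- a ≤ c ≤ b : convexity
      have hcv := hconv a c b ha h1 h2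
      have s1 := hslope a c ha h1
      linarith
    · -- c > b and c ≥ a : c is the max
      rcases le_total a b with h3 | h3
      · -- a ≤ b ≤ c
        rcases eq_or_lt_of_le hb with hb0 | hb0
        · have ha0 : a = 0 := le_antisymm (hb0 ▸ h3) ha
          have := hpos a ha
          have := hpos b hb
          nlinarith [hpos c hc]
        · have s1 := hslope b c hb h2
          have s2 := hslope a b ha h3
          -- b*(RHS - LHS) ≥ (a+b)*(c*fb - b*fc) + (b+c)*(b*fa - a*fb) ≥ 0
          nlinarith [mul_nonneg (add_nonneg ha hb) (sub_nonneg.2 s1),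
            mul_nonneg (add_nonneg hb hc) (sub_nonneg.2 s2)]
      · -- b ≤ a ≤ c
        rcases eq_or_lt_of_le ha with ha0 | ha0
        · have hb0 : b = 0 := le_antisymm (ha0 ▸ h3) hb
          nlinarith [hpos c hc, hpos b hb, hpos a ha]
        · have s1 := hslope a c ha h1
          have s2 := hslope b a hb h3
          nlinarith [mul_nonneg (add_nonneg ha hb) (sub_nonneg.2 s1),
            mul_nonneg (sub_nonneg.2 h1) (sub_nonneg.2 s2)]

lemma aux_L3 : ∀ a b c : ℝ, 0 ≤ a → 0 ≤ b → 0 ≤ c →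
    |a - b| * f c ≤ (a + c) * f b + (c + b) * f a := by
  intro a b c ha hb hc
  have h1 := aux_L1 f hpos hmono hslope hconv a b c ha hb hc
  have h2 : |a - c| ≤ a + c := by
    calc |a - c| ≤ |a| + |c| := abs_sub _ _
    _ = a + c := by rw [abs_of_nonneg ha, abs_of_nonneg hc]
  have h3 : |c - b| ≤ c + b := by
    calc |c - b| ≤ |c| + |b| := abs_sub _ _
    _ = c + b := by rw [abs_of_nonneg hc, abs_of_nonneg hb]
  nlinarith [hpos a ha, hpos b hb,
    mul_le_mul_of_nonneg_right h2 (hpos b hb).le,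
    mul_le_mul_of_nonneg_right h3 (hpos a ha).le]

-- the key pointwise inequality, x nonneg case
lemma aux_K' : ∀ x y z : ℝ, 0 ≤ x →
    |x - y| * f |z| ≤ |x - z| * f |y| + |z - y| * f |x| := by
  intro x y z hx
  rcases le_or_gt 0 y with hy | hy <;> rcases le_or_gt 0 z with hz | hz
  · -- all nonneg
    rw [abs_of_nonneg hx, abs_of_nonneg hy, abs_of_nonneg hz]
    exact aux_L1 f hpos hmono hslope hconv x y z hx hy hz
  · -- x,y ≥ 0 > z
    rw [abs_of_nonneg hx, abs_of_nonneg hy, abs_of_neg hz,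
      abs_of_nonneg (by linarith : (0:ℝ) ≤ x - z), abs_of_nonpos (by linarith : z - y ≤ 0)]
    have := aux_L3 f hpos hmono hslope hconv x y (-z) hx hy (by linarith)
    have e1 : x + -z = x - z := by ring
    have e2 : -z + y = -(z - y) := by ring
    rw [e1, e2] at this
    exact this
  · -- x, z ≥ 0 > y
    rw [abs_of_nonneg hx, abs_of_neg hy, abs_of_nonneg hz,
      abs_of_nonneg (by linarith : (0:ℝ) ≤ x - y), abs_of_nonneg (by linarith : (0:ℝ) ≤ z - y)]
    have := aux_L2 f hpos hmono hslope hconv x (-y) z hx (by linarith) hz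
    have e1 : x + -y = x - y := by ring
    have e2 : z + -y = z - y := by ring
    rw [e1, e2] at this
    exact this
  · -- x ≥ 0 > y, z
    rw [abs_of_nonneg hx, abs_of_neg hy, abs_of_neg hz,
      abs_of_nonneg (by linarith : (0:ℝ) ≤ x - y), abs_of_nonneg (by linarith : (0:ℝ) ≤ x - z)]
    have := aux_L2 f hpos hmono hslope hconv (-y) x (-z) (by linarith) hx (by linarith)
    have e1 : -y + x = x - y := by ring
    have e2 : -z + x = x - z := by ring
    have e3 : |-y - -z| = |z - y| := by rw [show -y - -z = z - y by ring]
    rw [e1, e2, e3] at this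
    linarith

lemma aux_K : ∀ x y z : ℝ,
    |x - y| * f |z| ≤ |x - z| * f |y| + |z - y| * f |x| := by
  intro x y z
  rcases le_or_gt 0 x with hx | hx
  · exact aux_K' f hpos hmono hslope hconv x y z hx
  · have := aux_K' f hpos hmono hslope hconv (-x) (-y) (-z) (by linarith)
    rw [show -x - -y = -(x - y) by ring, show -x - -z = -(x-z) by ring,
      show -z - -y = -(z-y) by ring, abs_neg, abs_neg, abs_neg, abs_neg, abs_neg, abs_neg] at this
    exact this

end Aux


theorem stmt_15 (f : ℝ → ℝ) (hf : ∀ x, 0 ≤ x → 0 < f x) :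
    (let ρ : ℝ → ℝ → ℝ := fun x y => |x - y| / (f |x| * f |y|)
     (∀ x y, 0 ≤ ρ x y) ∧ (∀ x y, ρ x y = ρ y x) ∧
     (∀ x y, ρ x y = 0 ↔ x = y) ∧
     (∀ x y z, ρ x y ≤ ρ x z + ρ z y)) ↔
    (MonotoneOn f (Set.Ici 0) ∧
     AntitoneOn (fun x => f x / x) (Set.Ioi 0) ∧
     ConvexOn ℝ (Set.Ici 0) f) := by
  have hA : ∀ x : ℝ, 0 < f |x| := fun x => hf _ (abs_nonneg x)
  constructor
  · rintro ⟨-, -, -, htri⟩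
    have unρ : ∀ x y z : ℝ, |x - y| * f |z| ≤ |x - z| * f |y| + |z - y| * f |x| := by
      intro x y z
      have key := htri x y z
      simp only at key
      rw [div_add_div _ _ (mul_pos (hA x) (hA z)).ne' (mul_pos (hA z) (hA y)).ne',
        div_le_div_iff₀ (mul_pos (hA x) (hA y))
          (mul_pos (mul_pos (hA x) (hA z)) (mul_pos (hA z) (hA y)))] at key
      rw [← mul_le_mul_iff_of_pos_right (mul_pos (mul_pos (hA x) (hA y)) (hA z))]
      nlinarith [key]
    have hmono : ∀ a b : ℝ, 0 ≤ a → a ≤ b → f a ≤ f b := by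
      intro a b ha hab
      have hb : (0:ℝ) ≤ b := le_trans ha hab
      rcases eq_or_lt_of_le ha with ha0 | ha0
      · rcases eq_or_lt_of_le hb with hb0 | hb0
        · rw [← ha0, ← hb0]
        · have h := unρ b (-b) 0
          rw [show b - -b = 2*b by ring, show b - 0 = b by ring,
            show (0:ℝ) - -b = b by ring, abs_of_nonneg (by linarith : (0:ℝ) ≤ 2*b),
            abs_of_nonneg hb, abs_neg, abs_of_nonneg hb, abs_zero] at h
          rw [← ha0]
          nlinarith [h, hb0]
      · have h := unρ b (-a) a
        rw [show b - -a = b + a by ring, show a - -a = 2*a by ring,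
          abs_of_nonneg (by linarith : (0:ℝ) ≤ b + a), abs_of_nonneg hb,
          abs_neg, abs_of_nonneg ha, abs_of_nonneg (by linarith : (0:ℝ) ≤ b - a),
          abs_of_nonneg (by linarith : (0:ℝ) ≤ 2*a)] at h
        nlinarith [h, ha0]
    have hslope : ∀ a b : ℝ, 0 ≤ a → a ≤ b → a * f b ≤ b * f a := by
      intro a b ha hab
      have hb : (0:ℝ) ≤ b := le_trans ha hab
      rcases eq_or_lt_of_le ha with rfl | ha0
      · nlinarith [hf 0 le_rfl, hb]
      · have h := unρ a (-a) b
        rw [show a - -a = 2*a by ring, show b - -a = b + a by ring,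
          abs_of_nonneg (by linarith : (0:ℝ) ≤ 2*a), abs_of_nonneg ha,
          abs_neg, abs_of_nonneg ha, abs_of_nonneg hb,
          abs_of_nonpos (by linarith : a - b ≤ 0), abs_of_nonneg (by linarith : (0:ℝ) ≤ b + a)] at h
        nlinarith [h]
    have hconv3 : ∀ p q r : ℝ, 0 ≤ p → p ≤ q → q ≤ r →
        (r - p) * f q ≤ (r - q) * f p + (q - p) * f r := by
      intro p q r hp hpq hqr
      have hq : (0:ℝ) ≤ q := le_trans hp hpq
      have hr : (0:ℝ) ≤ r := le_trans hq hqr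
      have h := unρ r p q
      rw [abs_of_nonneg hp, abs_of_nonneg hq, abs_of_nonneg hr,
        abs_of_nonneg (by linarith : (0:ℝ) ≤ r - p),
        abs_of_nonneg (by linarith : (0:ℝ) ≤ r - q),
        abs_of_nonneg (by linarith : (0:ℝ) ≤ q - p)] at h
      linarith
    refine ⟨fun a ha b hb hab => hmono a b ha hab, ?_, ?_⟩
    · intro a ha b hb hab
      have ha0 : (0:ℝ) < a := ha
      have hb0 : (0:ℝ) < b := hb
      simp only
      rw [div_le_div_iff₀ hb0 ha0]
      have := hslope a b ha0.le hab
      linarith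
    · refine ⟨convex_Ici 0, ?_⟩
      have hcx : ∀ x y s t : ℝ, 0 ≤ x → x ≤ y → 0 ≤ s → 0 ≤ t → s + t = 1 →
          f (s*x + t*y) ≤ s * f x + t * f y := by
        intro x y s t hx hxy hs ht hst
        rcases eq_or_lt_of_le hxy with he | hlt
        · subst he
          rw [show s*x + t*x = x by linear_combination x * hst]
          have : s * f x + t * f x = f x := by linear_combination (f x) * hst
          linarith
        · have hq1 : x ≤ s*x + t*y := by nlinarith
          have hq2 : s*x + t*y ≤ y := by nlinarith
          have h := hconv3 x (s*x+t*y) y hx hq1 hq2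
          have e1 : y - (s*x+t*y) = s*(y-x) := by linear_combination (-y) * hst
          have e2 : (s*x+t*y) - x = t*(y-x) := by linear_combination x * hst
          rw [e1, e2] at h
          nlinarith [h, sub_pos.2 hlt]
      intro x hx y hy s t hs ht hst
      simp only [smul_eq_mul]
      rcases le_total x y with h | h
      · exact hcx x y s t hx h hs ht hst
      · have := hcx y x t s hy h ht hs (by linarith)
        rw [show t*y + s*x = s*x + t*y by ring] at this
        linarith
  · rintro ⟨hm, han, hc⟩
    have hmono : ∀ a b : ℝ, 0 ≤ a → a ≤ b → f a ≤ f b :=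
      fun a b ha hab => hm (Set.mem_Ici.2 ha) (Set.mem_Ici.2 (ha.trans hab)) hab
    have hslope : ∀ a b : ℝ, 0 ≤ a → a ≤ b → a * f b ≤ b * f a := by
      intro a b ha hab
      rcases eq_or_lt_of_le ha with rfl | ha0
      · nlinarith [hf 0 le_rfl, le_trans ha hab]
      · have hb0 : (0:ℝ) < b := lt_of_lt_of_le ha0 hab
        have h := han (Set.mem_Ioi.2 ha0) (Set.mem_Ioi.2 hb0) hab
        simp only at h
        rw [div_le_div_iff₀ hb0 ha0] at h
        linarith
    have hconv3 : ∀ p q r : ℝ, 0 ≤ p → p ≤ q → q ≤ r →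
        (r - p) * f q ≤ (r - q) * f p + (q - p) * f r := by
      intro p q r hp hpq hqr
      rcases eq_or_lt_of_le (hpq.trans hqr) with hpr | hpr
      · have h1 : q = p := le_antisymm (by rw [hpr]; exact hqr) hpq
        have h2 : r = p := hpr.symm
        rw [h1, h2]
        simp
      · set s := (r - q)/(r - p) with hs_def
        set t := (q - p)/(r - p) with ht_def
        have hrp : (0:ℝ) < r - p := by linarith
        have hs : 0 ≤ s := div_nonneg (by linarith) hrp.le
        have ht : 0 ≤ t := div_nonneg (by linarith) hrp.le
        have hst : s + t = 1 := by
          rw [hs_def, ht_def, ← add_div,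
            show r - q + (q - p) = r - p by ring, div_self hrp.ne']
        have hmem_p : p ∈ Set.Ici (0:ℝ) := Set.mem_Ici.2 hp
        have hmem_r : r ∈ Set.Ici (0:ℝ) := Set.mem_Ici.2 (by linarith)
        have h := hc.2 hmem_p hmem_r hs ht hst
        simp only [smul_eq_mul] at h
        have e : s * p + t * r = q := by
          rw [hs_def, ht_def]; field_simp; ring
        rw [e] at h
        have h2 := mul_le_mul_of_nonneg_left h hrp.le
        have e2 : (r - p) * (s * f p + t * f r) = (r - q) * f p + (q - p) * f r := by
          rw [hs_def, ht_def]; field_simp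
        rw [e2] at h2
        linarith
    refine ⟨?_, ?_, ?_, ?_⟩
    · intro x y
      exact div_nonneg (abs_nonneg _) (mul_pos (hA x) (hA y)).le
    · intro x y
      simp only
      rw [abs_sub_comm, mul_comm]
    · intro x y
      simp only
      rw [div_eq_zero_iff]
      constructor
      · rintro (h | h)
        · exact sub_eq_zero.1 (abs_eq_zero.1 h)
        · exact absurd h (mul_pos (hA x) (hA y)).ne'
      · intro h
        subst h
        simp
    · intro x y z
      have hK := aux_K f hf hmono hslope hconv3 x y z
      simp only
      rw [div_add_div _ _ (mul_pos (hA x) (hA z)).ne' (mul_pos (hA z) (hA y)).ne',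
        div_le_div_iff₀ (mul_pos (hA x) (hA y))
          (mul_pos (mul_pos (hA x) (hA z)) (mul_pos (hA z) (hA y)))]
      nlinarith [mul_le_mul_of_nonneg_right hK
        (mul_pos (mul_pos (hA x) (hA y)) (hA z)).le]
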